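/- Let A, B ∈ S(n,ℝ), L = [[A,0],[0,B]], and let ν₀ be a strictly positive eigenvalue of AB of odd algebraic multiplicity. Fix j₀ ≥ 1, λ₀ = j₀/√ν₀, and ε > 0 small enough that λ₀ is the only zero of λ ↦ det G_{j₀}(λL) in [λ₀−ε, λ₀+ε]. Then m⁻(G_{j₀}((λ₀+ε)L)) ≠ m⁻(G_{j₀}((λ₀−ε)L)), i.e., the Morse index of G_{j₀}(λL) changes at λ₀. -/

import Mathlib

open Matrix

/-- `G_j(C,D) = [[-C, jI],[jI, -D]]`. -/
noncomputable def Gmat (n j : ℕ) (C D : Matrix (Fin n) (Fin n) ℝ) :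
    Matrix (Fin n ⊕ Fin n) (Fin n ⊕ Fin n) ℝ :=
  fromBlocks (-C) ((j : ℝ) • 1) ((j : ℝ) • 1) (-D)

/-- The Morse index of a real matrix: the number of negative roots of its characteristic
polynomial, counted with multiplicity. -/
noncomputable def morse {m : Type*} [Fintype m] [DecidableEq m]
    (M : Matrix m m ℝ) : ℕ :=
  (M.charpoly.roots.filter (fun x => x < 0)).card

open Polynomial in
/-- Evaluation of the characteristic polynomial. -/
lemma aux_charpoly_eval {m : Type*} [Fintype m] [DecidableEq m]
    (M : Matrix m m ℝ) (x : ℝ) :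
    M.charpoly.eval x = (x • (1 : Matrix m m ℝ) - M).det := by
  rw [Matrix.charpoly, _root_.eval_det, Matrix.matPolyEquiv_charmatrix, eval_sub, eval_X, eval_C]
  congr 1
  ext i j
  by_cases h : i = j <;>
    simp [Matrix.scalar_apply, Matrix.one_apply, Matrix.diagonal_apply, h]

open Polynomial in
lemma aux_charpoly_conj {m : Type*} [Fintype m] [DecidableEq m]
    (U V M : Matrix m m ℝ) (hUV : U * V = 1) (hVU : V * U = 1) :
    (U * M * V).charpoly = M.charpoly := by
  set P : Matrix m m ℝ[X] := U.map (C : ℝ →+* ℝ[X]) with hP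
  set Q : Matrix m m ℝ[X] := V.map (C : ℝ →+* ℝ[X]) with hQ
  have hPQ : P * Q = 1 := by
    rw [hP, hQ, ← Matrix.map_mul, hUV]
    simp
  have hscalar : Matrix.scalar m (X : ℝ[X]) = (X : ℝ[X]) • (1 : Matrix m m ℝ[X]) := by
    ext i j
    by_cases h : i = j <;>
      simp [Matrix.scalar_apply, Matrix.one_apply, Matrix.diagonal_apply, h]
  have key : charmatrix (U * M * V) = P * charmatrix M * Q := by
    unfold charmatrix
    simp only [RingHom.mapMatrix_apply]
    rw [Matrix.mul_sub, Matrix.sub_mul]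
    congr 1
    · rw [hscalar, Matrix.mul_smul, Matrix.mul_one, Matrix.smul_mul, hPQ]
    · rw [hP, hQ, ← Matrix.map_mul, ← Matrix.map_mul]
  rw [Matrix.charpoly, Matrix.charpoly, key, Matrix.det_mul, Matrix.det_mul]
  have : P.det * Q.det = 1 := by rw [← Matrix.det_mul, hPQ, Matrix.det_one]
  calc P.det * (charmatrix M).det * Q.det
      = P.det * Q.det * (charmatrix M).det := by ring
    _ = (charmatrix M).det := by rw [this, one_mul]

open Polynomial in
lemma aux_charpoly_diagonal {m : Type*} [Fintype m] [DecidableEq m] (d : m → ℝ) :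
    (Matrix.diagonal d).charpoly = ∏ i, (X - C (d i)) := by
  have h : charmatrix (Matrix.diagonal d) = Matrix.diagonal (fun i => X - C (d i)) := by
    ext i j
    by_cases h : i = j
    · subst h; simp [charmatrix_apply_eq]
    · simp [charmatrix_apply_ne _ _ _ h, Matrix.diagonal_apply_ne _ h]
  rw [Matrix.charpoly, h, Matrix.det_diagonal]

open Polynomial in
lemma aux_splits_charpoly {m : Type*} [Fintype m] [DecidableEq m]
    {M : Matrix m m ℝ} (h : M.IsSymm) : M.charpoly.Splits := by
  have hH : M.IsHermitian := by
    rw [Matrix.IsHermitian, Matrix.conjTranspose_eq_transpose_of_trivial]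
    exact h
  have hspec := hH.spectral_theorem
  set U : Matrix m m ℝ := (hH.eigenvectorUnitary : Matrix m m ℝ) with hU
  have h1 : U * star U = 1 := Matrix.mem_unitaryGroup_iff.mp hH.eigenvectorUnitary.2
  have h2 : star U * U = 1 := Matrix.mem_unitaryGroup_iff'.mp hH.eigenvectorUnitary.2
  rw [hspec, Unitary.conjStarAlgAut_apply, aux_charpoly_conj _ _ _ h1 h2, aux_charpoly_diagonal]
  apply Polynomial.Splits.prod
  intro i _
  exact Polynomial.Splits.X_sub_C _

lemma aux_neg_prod (s : Multiset ℝ) (h : ∀ x ∈ s, x < 0) :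
    0 < (-1 : ℝ) ^ (Multiset.card s) * s.prod := by
  induction s using Multiset.induction_on with
  | empty => simp
  | cons a s ih =>
    have ha : a < 0 := h a (Multiset.mem_cons_self _ _)
    have hs := ih (fun x hx => h x (Multiset.mem_cons_of_mem hx))
    rw [Multiset.prod_cons, Multiset.card_cons, pow_succ]
    nlinarith

lemma aux_det_neg_iff {m : Type*} [Fintype m] [DecidableEq m]
    {M : Matrix m m ℝ} (hM : M.IsSymm) (hdet : M.det ≠ 0) :
    (M.det < 0 ↔ Odd (morse M)) := by
  classical
  have hs := aux_splits_charpoly hM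
  have hprod := Matrix.det_eq_prod_roots_charpoly_of_splits hs
  set r := M.charpoly.roots with hr
  have h0 : (0 : ℝ) ∉ r := by
    intro h0
    exact hdet (by rw [hprod]; exact Multiset.prod_eq_zero h0)
  have hsplit : (r.filter (fun x => x < 0)) + (r.filter (fun x => ¬ x < 0)) = r :=
    Multiset.filter_add_not _ _
  have hposprod : 0 < (r.filter (fun x => ¬ x < 0)).prod := by
    apply Multiset.prod_pos
    intro x hx
    have hxr := Multiset.mem_filter.mp hx
    refine lt_of_le_of_ne (not_lt.mp hxr.2) ?_
    intro hx0
    exact h0 (hx0 ▸ hxr.1)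
  have hneg := aux_neg_prod (r.filter (fun x => x < 0))
    (fun x hx => (Multiset.mem_filter.mp hx).2)
  have hdet' : M.det = (r.filter (fun x => x < 0)).prod * (r.filter (fun x => ¬ x < 0)).prod := by
    rw [hprod, ← Multiset.prod_add, hsplit]
  have hmorse : morse M = Multiset.card (r.filter (fun x => x < 0)) := rfl
  rw [hmorse]
  rcases Nat.even_or_odd (Multiset.card (r.filter (fun x => x < 0))) with he | ho
  · rw [he.neg_one_pow, one_mul] at hneg
    constructor
    · intro hlt
      nlinarith [mul_pos hneg hposprod]
    · intro hodd
      exact absurd he (Nat.not_even_iff_odd.mpr hodd)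
  · rw [ho.neg_one_pow] at hneg
    have : (r.filter (fun x => x < 0)).prod < 0 := by nlinarith
    constructor
    · intro _; exact ho
    · intro _
      rw [hdet']
      exact mul_neg_of_neg_of_pos this hposprod

lemma aux_Gmat_isSymm {n j : ℕ} {A B : Matrix (Fin n) (Fin n) ℝ}
    (hA : A.IsSymm) (hB : B.IsSymm) (l : ℝ) :
    (Gmat n j (l • A) (l • B)).IsSymm := by
  unfold Gmat
  rw [Matrix.IsSymm]
  simp [Matrix.fromBlocks_transpose, Matrix.transpose_smul, hA.eq, hB.eq]

/-- The key determinant identity: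
`sign(σ) * det G_j(lA, lB) = l^(2n) * charpoly(AB).eval (j²/l²)`. -/
lemma aux_det_Gmat (n j : ℕ) (hj : 0 < j) (A B : Matrix (Fin n) (Fin n) ℝ)
    (l : ℝ) (hl : l ≠ 0) :
    ((Equiv.Perm.sign (Equiv.sumComm (Fin n) (Fin n)) : ℤ) : ℝ) * (Gmat n j (l • A) (l • B)).det
      = l ^ (2 * n) * (A * B).charpoly.eval ((j : ℝ) ^ 2 / l ^ 2) := by
  have hjR : (j : ℝ) ≠ 0 := Nat.cast_ne_zero.mpr hj.ne'
  set σ : Equiv.Perm (Fin n ⊕ Fin n) := Equiv.sumComm (Fin n) (Fin n) with hσ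
  have hswap : ((Gmat n j (l • A) (l • B)).submatrix id σ)
      = fromBlocks ((j : ℝ) • 1) (-(l • A)) (-(l • B)) ((j : ℝ) • 1) := by
    have : (σ : (Fin n ⊕ Fin n) → (Fin n ⊕ Fin n)) = Sum.swap := rfl
    rw [this]
    unfold Gmat
    rw [Matrix.fromBlocks_submatrix_sum_swap_right]
    rfl
  have hperm := Matrix.det_permute' σ (Gmat n j (l • A) (l • B))
  rw [hswap] at hperm
  -- compute the determinant of the swapped matrix
  letI : Invertible ((j : ℝ) • (1 : Matrix (Fin n) (Fin n) ℝ)) :=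
    ⟨(j : ℝ)⁻¹ • 1, by
        rw [Matrix.smul_mul, Matrix.mul_smul, Matrix.mul_one, smul_smul,
          inv_mul_cancel₀ hjR, one_smul], by
        rw [Matrix.smul_mul, Matrix.mul_smul, Matrix.mul_one, smul_smul,
          mul_inv_cancel₀ hjR, one_smul]⟩
  have hinv : ⅟ ((j : ℝ) • (1 : Matrix (Fin n) (Fin n) ℝ)) = (j : ℝ)⁻¹ • 1 := rfl
  have hdet2 := Matrix.det_fromBlocks₂₂ ((j : ℝ) • (1 : Matrix (Fin n) (Fin n) ℝ))
    (-(l • A)) (-(l • B)) ((j : ℝ) • 1)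
  rw [hinv] at hdet2
  have hmid : (-(l • A)) * ((j : ℝ)⁻¹ • (1 : Matrix (Fin n) (Fin n) ℝ)) * (-(l • B))
      = (l ^ 2 * (j : ℝ)⁻¹) • (A * B) := by
    simp only [Matrix.neg_mul, Matrix.mul_neg, neg_neg, Matrix.smul_mul, Matrix.mul_smul,
      Matrix.mul_one, smul_smul]
    rw [smul_neg, neg_neg, smul_smul]
    congr 1
    ring
  rw [hmid] at hdet2
  have hfact : ((j : ℝ) • (1 : Matrix (Fin n) (Fin n) ℝ)) - (l ^ 2 * (j : ℝ)⁻¹) • (A * B)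
      = (l ^ 2 * (j : ℝ)⁻¹) • (((j : ℝ) ^ 2 / l ^ 2) • (1 : Matrix (Fin n) (Fin n) ℝ) - A * B) := by
    rw [smul_sub, smul_smul]
    congr 2
    field_simp
  rw [hfact, Matrix.det_smul, Matrix.det_smul, Matrix.det_one, mul_one] at hdet2
  rw [← aux_charpoly_eval] at hdet2
  -- now combine
  rw [← hperm, hdet2]
  have hcards : Fintype.card (Fin n) = n := Fintype.card_fin n
  rw [hcards]
  have : (j : ℝ) ^ n * ((l ^ 2 * (j : ℝ)⁻¹) ^ n *
      Polynomial.eval ((j : ℝ) ^ 2 / l ^ 2) (A * B).charpoly)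
      = ((j : ℝ) * (l ^ 2 * (j : ℝ)⁻¹)) ^ n *
        Polynomial.eval ((j : ℝ) ^ 2 / l ^ 2) (A * B).charpoly := by
    rw [mul_pow]; ring
  rw [this]
  have hjl : (j : ℝ) * (l ^ 2 * (j : ℝ)⁻¹) = l ^ 2 := by
    field_simp
  rw [hjl, ← pow_mul]

theorem stmt16 (n : ℕ) (A B : Matrix (Fin n) (Fin n) ℝ) (hA : A.IsSymm) (hB : B.IsSymm)
    (ν₀ : ℝ) (hν₀ : 0 < ν₀) (heig : (A * B - ν₀ • 1).det = 0)
    (hodd : Odd (Polynomial.rootMultiplicity ν₀ (A * B).charpoly))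
    (j₀ : ℕ) (hj₀ : 1 ≤ j₀) (l₀ : ℝ) (hl₀ : l₀ = (j₀ : ℝ) / Real.sqrt ν₀)
    (ε : ℝ) (hε : 0 < ε) (hεl : 0 < l₀ - ε)
    (hiso : ∀ l : ℝ, l ∈ Set.Icc (l₀ - ε) (l₀ + ε) →
      (Gmat n j₀ (l • A) (l • B)).det = 0 → l = l₀) :
    morse (Gmat n j₀ ((l₀ + ε) • A) ((l₀ + ε) • B)) ≠
      morse (Gmat n j₀ ((l₀ - ε) • A) ((l₀ - ε) • B)) := by
  classical
  set P : Polynomial ℝ := (A * B).charpoly with hPdef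
  set k : ℕ := Polynomial.rootMultiplicity ν₀ P with hkdef
  set g : Polynomial ℝ := P /ₘ (Polynomial.X - Polynomial.C ν₀) ^ k with hgdef
  have hPne : P ≠ 0 := (Matrix.charpoly_monic _).ne_zero
  have hfac : (Polynomial.X - Polynomial.C ν₀) ^ k * g = P :=
    Polynomial.pow_mul_divByMonic_rootMultiplicity_eq P ν₀
  have hg0 : g.eval ν₀ ≠ 0 :=
    Polynomial.eval_divByMonic_pow_rootMultiplicity_ne_zero ν₀ hPne
  have hPeval : ∀ x : ℝ, P.eval x = (x - ν₀) ^ k * g.eval x := by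
    intro x
    conv_lhs => rw [← hfac]
    simp [Polynomial.eval_mul, Polynomial.eval_pow]
  -- basic positivity
  have hj₀R : (0 : ℝ) < (j₀ : ℝ) := by exact_mod_cast hj₀
  have hl₀pos : 0 < l₀ := by linarith
  have hlP' : 0 < l₀ + ε := by linarith
  have hlM' : 0 < l₀ - ε := hεl
  have hsqrt : Real.sqrt ν₀ > 0 := Real.sqrt_pos.mpr hν₀
  have hl₀sq : l₀ ^ 2 = (j₀ : ℝ) ^ 2 / ν₀ := by
    rw [hl₀, div_pow, Real.sq_sqrt hν₀.le]
  have hx₀ : (j₀ : ℝ) ^ 2 / l₀ ^ 2 = ν₀ := by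
    rw [hl₀sq]
    field_simp
  -- the function x(l) = j₀²/l²
  set x : ℝ → ℝ := fun l => (j₀ : ℝ) ^ 2 / l ^ 2 with hxdef
  have hxmono : ∀ a b : ℝ, 0 < a → a < b → x b < x a := by
    intro a b ha hab
    apply div_lt_div_of_pos_left (by positivity) (by positivity)
    exact pow_lt_pow_left₀ hab ha.le two_ne_zero |>.le.lt_of_ne
      (by nlinarith)
  have hx₀' : x l₀ = ν₀ := hx₀
  have hxP' : x (l₀ + ε) < ν₀ := by
    have := hxmono l₀ (l₀ + ε) hl₀pos (by linarith)
    rwa [hx₀'] at this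
  have hxM' : ν₀ < x (l₀ - ε) := by
    have := hxmono (l₀ - ε) l₀ hlM' (by linarith)
    rwa [hx₀'] at this
  -- the sign of the permutation
  set s : ℝ := ((Equiv.Perm.sign (Equiv.sumComm (Fin n) (Fin n)) : ℤ) : ℝ) with hsdef
  have hs1 : s = 1 ∨ s = -1 := by
    rcases Int.units_eq_one_or (Equiv.Perm.sign (Equiv.sumComm (Fin n) (Fin n))) with h | h <;>
      rw [hsdef, h] <;> [left; right] <;> norm_num
  have hsne : s ≠ 0 := by rcases hs1 with h | h <;> rw [h] <;> norm_num
  have hdetG : ∀ l : ℝ, l ≠ 0 → s * (Gmat n j₀ (l • A) (l • B)).det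
      = l ^ (2 * n) * P.eval (x l) :=
    fun l hl => aux_det_Gmat n j₀ (by omega) A B l hl
  -- g ∘ x is nonzero on the interval
  have hgnz : ∀ l ∈ Set.Icc (l₀ - ε) (l₀ + ε), g.eval (x l) ≠ 0 := by
    intro l hl hgl
    have hlpos : 0 < l := lt_of_lt_of_le hlM' hl.1
    have hPz : P.eval (x l) = 0 := by rw [hPeval, hgl, mul_zero]
    have hdet0 : (Gmat n j₀ (l • A) (l • B)).det = 0 := by
      have h := hdetG l hlpos.ne'
      rw [hPz, mul_zero] at h
      exact (mul_eq_zero.mp h).resolve_left hsne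
    have := hiso l hl hdet0
    subst this
    rw [hxdef] at hgl
    simp only [hx₀] at hgl
    exact hg0 hgl
  -- g ∘ x is continuous on the interval
  have hcont : ContinuousOn (fun l => g.eval (x l)) (Set.Icc (l₀ - ε) (l₀ + ε)) := by
    apply g.continuous_aeval.comp_continuousOn ?_ |>.congr (fun l _ => rfl)
    · exact ContinuousOn.div continuousOn_const (by fun_prop)
        (fun l hl => by
          have : 0 < l := lt_of_lt_of_le hlM' hl.1
          positivity)
  -- same sign at the endpoints
  have hsame : 0 < g.eval (x (l₀ - ε)) * g.eval (x (l₀ + ε)) := by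
    rcases lt_trichotomy (g.eval (x (l₀ - ε)) * g.eval (x (l₀ + ε))) 0 with hlt | heq | hgt
    · exfalso
      have hab : l₀ - ε ≤ l₀ + ε := by linarith
      rcases mul_neg_iff.mp hlt with ⟨h1, h2⟩ | ⟨h1, h2⟩
      · have h0mem : (0 : ℝ) ∈ Set.Icc (g.eval (x (l₀ + ε))) (g.eval (x (l₀ - ε))) :=
          ⟨h2.le, h1.le⟩
        obtain ⟨c, hc, hc0⟩ := intermediate_value_Icc' hab hcont h0mem
        exact hgnz c hc hc0
      · have h0mem : (0 : ℝ) ∈ Set.Icc (g.eval (x (l₀ - ε))) (g.eval (x (l₀ + ε))) :=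
          ⟨h1.le, h2.le⟩
        obtain ⟨c, hc, hc0⟩ := intermediate_value_Icc hab hcont h0mem
        exact hgnz c hc hc0
    · exfalso
      rcases mul_eq_zero.mp heq with h | h
      · exact hgnz (l₀ - ε) ⟨le_refl _, by linarith⟩ h
      · exact hgnz (l₀ + ε) ⟨by linarith, le_refl _⟩ h
    · exact hgt
  -- the product of the two determinants is negative
  set dP' : ℝ := (Gmat n j₀ ((l₀ + ε) • A) ((l₀ + ε) • B)).det with hdP'def
  set dM' : ℝ := (Gmat n j₀ ((l₀ - ε) • A) ((l₀ - ε) • B)).det with hdM'def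
  have hprod : dP' * dM' < 0 := by
    have h1 := hdetG (l₀ + ε) hlP'.ne'
    have h2 := hdetG (l₀ - ε) hlM'.ne'
    have hss : s * s = 1 := by rcases hs1 with h | h <;> rw [h] <;> norm_num
    have : dP' * dM' = (s * dP') * (s * dM') := by
      rw [show (s * dP') * (s * dM') = (s * s) * (dP' * dM') by ring, hss, one_mul]
    rw [this, h1, h2, hPeval, hPeval]
    have hp1 : (0 : ℝ) < (l₀ + ε) ^ (2 * n) := by positivity
    have hp2 : (0 : ℝ) < (l₀ - ε) ^ (2 * n) := by positivity
    have hkP' : (x (l₀ + ε) - ν₀) ^ k < 0 := Odd.pow_neg hodd (by linarith)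
    have hkM' : 0 < (x (l₀ - ε) - ν₀) ^ k := pow_pos (by linarith) k
    have hneg2 := mul_neg_of_pos_of_neg (mul_pos (mul_pos hp1 hp2) hsame)
      (mul_neg_of_neg_of_pos hkP' hkM')
    nlinarith [hneg2]
  -- conclude via the Morse index parity
  have hdP'ne : dP' ≠ 0 := by
    intro h; rw [h, zero_mul] at hprod; exact lt_irrefl 0 hprod
  have hdM'ne : dM' ≠ 0 := by
    intro h; rw [h, mul_zero] at hprod; exact lt_irrefl 0 hprod
  have hsymP' : (Gmat n j₀ ((l₀ + ε) • A) ((l₀ + ε) • B)).IsSymm :=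
    aux_Gmat_isSymm hA hB (l₀ + ε)
  have hsymM' : (Gmat n j₀ ((l₀ - ε) • A) ((l₀ - ε) • B)).IsSymm :=
    aux_Gmat_isSymm hA hB (l₀ - ε)
  have hiffP' := aux_det_neg_iff hsymP' hdP'ne
  have hiffM' := aux_det_neg_iff hsymM' hdM'ne
  intro hEq
  rw [hEq] at hiffP'
  have : dP' < 0 ↔ dM' < 0 := hiffP'.trans hiffM'.symm
  rcases mul_neg_iff.mp hprod with ⟨h1, h2⟩ | ⟨h1, h2⟩
  · exact absurd (this.mpr h2) (not_lt.mpr h1.le)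
  · exact absurd (this.mp h1) (not_lt.mpr h2.le)
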